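/- Let n and s be integers with 5 ≤ s ≤ n−1, let Γ, X₁, …, X_s be smooth vector fields on ℝ^n, and let h₁, …, h_{s−2} be smooth functions on ℝ^n with Γ h_j = 0 for all j = 1, …, s−2. Then for every smooth function f on ℝ^n, B(f, h₁, …, h_{s−2}) = h̃ · (Γ f), where B is the (s−1)-ary bracket induced by 𝒩 = Γ∧X₁∧⋯∧X_{s−2} + Γ∧X₁∧⋯∧X_{s−4}∧X_{s−1}∧X_s and h̃ is the associated multiplier; in particular Γ is quasi-generalized Hamiltonian with respect to 𝒩. -/
import Mathlib

lemma det_row0 {m : ℕ} (M : Matrix (Fin (m+1)) (Fin (m+1)) ℝ)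
    (h0 : ∀ j : Fin m, M 0 j.succ = 0) :
    M.det = M 0 0 * (M.submatrix Fin.succ Fin.succ).det := by
  rw [Matrix.det_succ_row_zero, Fin.sum_univ_succ]
  simp [h0, Fin.succAbove_zero]



/-- A (not necessarily smooth) vector field on `ℝⁿ`, i.e. a map `ℝⁿ → ℝⁿ`. -/
abbrev VF (n : ℕ) : Type := (Fin n → ℝ) → (Fin n → ℝ)

/-- The action of a vector field `X` on a function `f`:
`(X f)(x) = Df(x)[X(x)]` (directional derivative). -/
noncomputable def vAct {n : ℕ} (X : VF n) (f : (Fin n → ℝ) → ℝ) : (Fin n → ℝ) → ℝ :=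
  fun x => fderiv ℝ f x (X x)

/-- The Lie bracket of two vector fields:
`[X, Y](x) = DY(x)[X(x)] − DX(x)[Y(x)]`. -/
noncomputable def vLie {n : ℕ} (X Y : VF n) : VF n :=
  fun x => fderiv ℝ Y x (X x) - fderiv ℝ X x (Y x)

/-- The `m`-ary bracket induced by the decomposable `m`-vector field `Z 0 ∧ ⋯ ∧ Z (m-1)`:
the determinant of the matrix whose `(i, j)` entry is `(Z i) (f j)`. -/
noncomputable def detBracket {n m : ℕ} (Z : Fin m → VF n)
    (f : Fin m → ((Fin n → ℝ) → ℝ)) : (Fin n → ℝ) → ℝ :=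
  fun x => Matrix.det (Matrix.of fun i j => vAct (Z i) (f j) x)

/-- The generalized Jacobi identity of order `m` for an `m`-ary bracket `B` on smooth
functions on `ℝⁿ`:
`∑_{σ ∈ S_{2m−1}} sign σ • B(B(f_{σ(1)}, …, f_{σ(m)}), f_{σ(m+1)}, …, f_{σ(2m−1)}) = 0`. -/
def GJI (n m : ℕ) (B : (Fin m → ((Fin n → ℝ) → ℝ)) → ((Fin n → ℝ) → ℝ)) : Prop :=
  ∀ f : Fin (2 * m - 1) → ((Fin n → ℝ) → ℝ), (∀ i, ContDiff ℝ (⊤ : ℕ∞) (f i)) →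
    ∀ x, (∑ σ : Equiv.Perm (Fin (2 * m - 1)),
      ((Equiv.Perm.sign σ : ℤ) : ℝ) *
        B (fun i : Fin m =>
            if _hi : (i : ℕ) = 0 then
              B (fun k : Fin m => f (σ ⟨(k : ℕ), lt_of_lt_of_le k.isLt (by omega)⟩))
            else f (σ ⟨m - 1 + (i : ℕ), by have hi := i.isLt; omega⟩)) x) = 0

/-- Rows `(Γ, X₁, …, X_{s−4}, X_{s−3}, X_{s−2})` of the first summand of `𝒩`
(here `X i` denotes `X_{i+1}`). -/
noncomputable def rowsM {n : ℕ} (s : ℕ) (Γ : VF n) (X : Fin s → VF n) :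
    Fin (s - 1) → VF n :=
  fun i =>
    if _hi : (i : ℕ) = 0 then Γ
    else X ⟨(i : ℕ) - 1, by have := i.isLt; omega⟩

/-- Rows `(Γ, X₁, …, X_{s−4}, X_{s−1}, X_s)` of the second summand of `𝒩`
(here `X i` denotes `X_{i+1}`). -/
noncomputable def rowsM' {n : ℕ} (s : ℕ) (Γ : VF n) (X : Fin s → VF n) :
    Fin (s - 1) → VF n :=
  fun i =>
    if _hi : (i : ℕ) = 0 then Γ
    else if (i : ℕ) ≤ s - 4 then X ⟨(i : ℕ) - 1, by have := i.isLt; omega⟩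
    else X ⟨(i : ℕ) + 1, by have := i.isLt; omega⟩

/-- Rows `(X₁, …, X_{s−4}, X_{s−3}, X_{s−2})` of the first summand of the multiplier. -/
noncomputable def rowsA {n : ℕ} (s : ℕ) (X : Fin s → VF n) : Fin (s - 2) → VF n :=
  fun i => X ⟨(i : ℕ), by have := i.isLt; omega⟩

/-- Rows `(X₁, …, X_{s−4}, X_{s−1}, X_s)` of the second summand of the multiplier. -/
noncomputable def rowsA' {n : ℕ} (s : ℕ) (X : Fin s → VF n) : Fin (s - 2) → VF n :=
  fun i =>
    if (i : ℕ) < s - 4 then X ⟨(i : ℕ), by have := i.isLt; omega⟩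
    else X ⟨(i : ℕ) + 2, by have := i.isLt; omega⟩

/-- The argument tuple `(f, h₁, …, h_{s−2})` for the bracket `B`. -/
def consArg {n : ℕ} (s : ℕ) (f : (Fin n → ℝ) → ℝ)
    (h : Fin (s - 2) → ((Fin n → ℝ) → ℝ)) : Fin (s - 1) → ((Fin n → ℝ) → ℝ) :=
  fun k =>
    if _hk : (k : ℕ) = 0 then f
    else h ⟨(k : ℕ) - 1, by have := k.isLt; omega⟩

/-- With `5 ≤ s ≤ n − 1`, vector fields `Γ, X₁, …, X_s` and first
integrals `h₁, …, h_{s−2}` of `Γ`, one has `B(f, h₁, …, h_{s−2}) = h̃ ⬝ (Γ f)` for every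
smooth `f`, where `B` is the `(s−1)`-ary bracket induced by
`𝒩 = Γ∧X₁∧⋯∧X_{s−2} + Γ∧X₁∧⋯∧X_{s−4}∧X_{s−1}∧X_s` and `h̃` is the associated
multiplier; in particular `Γ` is quasi-generalized Hamiltonian with respect to `𝒩`. -/
theorem statement1 (n s : ℕ) (hs : 5 ≤ s) (hn : s + 1 ≤ n)
    (Γ : VF n) (X : Fin s → VF n) (h : Fin (s - 2) → ((Fin n → ℝ) → ℝ))
    (hΓ : ContDiff ℝ (⊤ : ℕ∞) Γ) (hX : ∀ i, ContDiff ℝ (⊤ : ℕ∞) (X i))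
    (hh : ∀ j, ContDiff ℝ (⊤ : ℕ∞) (h j))
    (hfi : ∀ j, vAct Γ (h j) = 0) :
    ∀ f : (Fin n → ℝ) → ℝ, ContDiff ℝ (⊤ : ℕ∞) f → ∀ x,
      detBracket (rowsM s Γ X) (consArg s f h) x
        + detBracket (rowsM' s Γ X) (consArg s f h) x
      = (detBracket (rowsA s X) h x + detBracket (rowsA' s X) h x) * vAct Γ f x := by
  intro f hf x
  have hm : s - 1 = (s - 2) + 1 := by omega
  have key : ∀ (Z : Fin (s-1) → VF n) (A : Fin (s-2) → VF n),
      (∀ k : Fin (s-1), (k : ℕ) = 0 → Z k = Γ) →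
      (∀ k : Fin (s-1), (k:ℕ) ≠ 0 → ∀ (i : Fin (s-2)), (k:ℕ) = (i:ℕ) + 1 → Z k = A i) →
      detBracket Z (consArg s f h) x = detBracket A h x * vAct Γ f x := by
    intro Z A hZ0 hZs
    unfold detBracket
    rw [← Matrix.det_submatrix_equiv_self (finCongr hm.symm)]
    rw [det_row0, mul_comm]
    · congr 1
      · congr 1
        ext i j
        simp only [Matrix.submatrix_apply, Matrix.of_apply]
        have hZ : Z (finCongr hm.symm i.succ) = A i := hZs _ (by simp) i (by simp)
        have harg : consArg s f h (finCongr hm.symm j.succ) = h j := by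
          unfold consArg
          rw [dif_neg (by simp)]
          congr 1
        rw [hZ, harg]
      · simp only [Matrix.submatrix_apply, Matrix.of_apply]
        rw [hZ0 _ (by simp)]
        rfl
    · intro j
      simp only [Matrix.submatrix_apply, Matrix.of_apply]
      rw [hZ0 _ (by simp)]
      have harg : consArg s f h (finCongr hm.symm j.succ)
          = h ⟨(j:ℕ), by have := j.isLt; omega⟩ := by
        unfold consArg
        rw [dif_neg (by simp)]
        congr 1
      rw [harg, hfi]
      rfl
  rw [key (rowsM s Γ X) (rowsA s X), key (rowsM' s Γ X) (rowsA' s X)]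
  · ring
  · intro k hk
    unfold rowsM'
    rw [dif_pos hk]
  · intro k hk i hki
    unfold rowsM' rowsA'
    rw [dif_neg hk]
    rcases Nat.lt_or_ge (i:ℕ) (s-4) with hlt | hge
    · rw [if_pos (by omega), if_pos hlt]
      exact congrArg X (Fin.eq_of_val_eq (by simp only [Fin.val_mk]; omega))
    · rw [if_neg (by omega), if_neg (by omega)]
      exact congrArg X (Fin.eq_of_val_eq (by simp only [Fin.val_mk]; omega))
  · intro k hk
    unfold rowsM
    rw [dif_pos hk]
  · intro k hk i hki
    unfold rowsM rowsA
    rw [dif_neg hk]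
    exact congrArg X (Fin.eq_of_val_eq (by simp only [Fin.val_mk]; omega))
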